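/- Let P be a partition with largest part P_0 > 0 and P_1 > 0, satisfying P_0 − P*_0 ≥ 2P_1 − 2 and |P| ≤ 2P_0 − 2. Let k ≥ 1 be the largest integer with P_k = P_1, and let Λ be the arithmetic progression generated by P_0 − 1 and P_k − k − 1 (i.e. the coset of the subgroup generated by their difference containing them). Then P⁺_Λ = P, and P⁻_Λ differs from P in exactly two places: (P⁻_Λ)_0 = P_0 − 1, (P⁻_Λ)_k = P_k − 1, and (P⁻_Λ)_i = P_i otherwise; in particular P⁻_Λ and P are 2-linked. -/
import Mathlib


open scoped Classical

/-- A partition: weakly decreasing, eventually zero sequence of nonnegative integers. -/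
def IsPartition (P : ℕ → ℕ) : Prop :=
  (∀ i, P (i + 1) ≤ P i) ∧ ∃ N, ∀ n ≥ N, P n = 0

/-- An arithmetic progression: a proper subset of ℤ whose set of differences is
closed under addition. -/
def IsAP (Λ : Set ℤ) : Prop :=
  Λ ≠ Set.univ ∧
    ∀ a b c d : ℤ, a ∈ Λ → b ∈ Λ → c ∈ Λ → d ∈ Λ →
      ∃ x ∈ Λ, ∃ y ∈ Λ, x - y = (a - b) + (c - d)

/-- Upward displacement of a partition with respect to an arithmetic progression.
The convention `P_{-1} = ∞` is encoded by the disjunct `i = 0`. -/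
noncomputable def upDisp (P : ℕ → ℕ) (Λ : Set ℤ) : ℕ → ℕ :=
  fun i => if ((P i : ℤ) - i) ∈ Λ ∧ (i = 0 ∨ P i < P (i - 1)) then P i + 1 else P i

/-- Downward displacement of a partition with respect to an arithmetic progression. -/
noncomputable def downDisp (P : ℕ → ℕ) (Λ : Set ℤ) : ℕ → ℕ :=
  fun i => if ((P i : ℤ) - i - 1) ∈ Λ ∧ P (i + 1) < P i then P i - 1 else P i

/-- The sum `|P|` of the parts of a partition. -/
noncomputable def psum (P : ℕ → ℕ) : ℕ := ∑ᶠ i, P i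

/-- Two partitions are linked if some arithmetic progression displaces one to the other. -/
def Linked (P Q : ℕ → ℕ) : Prop :=
  ∃ Λ : Set ℤ, IsAP Λ ∧ Q = upDisp P Λ ∧ P = downDisp Q Λ

/-- `k`-linked: linked with sums differing by `k`. -/
def KLinked (k : ℕ) (P Q : ℕ → ℕ) : Prop :=
  Linked P Q ∧ psum Q = psum P + k

/-- A valid sequence of partitions: adjacent pairs are 1-linked or 2-linked. -/
def ValidSeq (n : ℕ) (s : ℕ → ℕ → ℕ) : Prop :=
  (∀ j ≤ n, IsPartition (s j)) ∧
    ∀ j < n, KLinked 1 (s j) (s (j + 1)) ∨ KLinked 2 (s j) (s (j + 1))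

/-- The difficulty `δ(P)`: the least number of 1-linked adjacent pairs in a valid
sequence from the empty partition to `P`. -/
noncomputable def delta (P : ℕ → ℕ) : ℕ :=
  sInf { c | ∃ n s, ValidSeq n s ∧ s 0 = (fun _ => 0) ∧ s n = P ∧
    c = ((Finset.range n).filter fun j => KLinked 1 (s j) (s (j + 1))).card }

/-- The conjugate (dual) partition: `P*_n = #{m : P_m > n}`. -/
noncomputable def conj (P : ℕ → ℕ) : ℕ → ℕ := fun n => Set.ncard { m | n < P m }
section Aux

lemma part_mono {P : ℕ → ℕ} (hP : IsPartition P) : ∀ i j : ℕ, i ≤ j → P j ≤ P i :=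
  fun _ _ h => antitone_nat_of_succ_le hP.1 h

lemma conj_pos_iff {P : ℕ → ℕ} (hP : IsPartition P) (m : ℕ) :
    0 < P m ↔ m < conj P 0 := by
  obtain ⟨hdec, N₀, hz⟩ := hP
  have hmono : ∀ i j : ℕ, i ≤ j → P j ≤ P i :=
    fun _ _ h => antitone_nat_of_succ_le hdec h
  have hfin : {m | 0 < P m}.Finite := by
    apply (Set.finite_Iio N₀).subset
    intro a ha
    simp only [Set.mem_setOf_eq] at ha
    simp only [Set.mem_Iio]
    by_contra hc
    have := hz a (le_of_not_gt hc)
    omega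
  show 0 < P m ↔ m < Set.ncard {m | 0 < P m}
  constructor
  · intro hm
    have hsub : Set.Iic m ⊆ {m | 0 < P m} := fun a ha =>
      lt_of_lt_of_le hm (hmono a m ha)
    have h1 : (Set.Iic m).ncard = m + 1 := by
      rw [← Finset.coe_Iic, Set.ncard_coe_finset, Nat.card_Iic]
    have := Set.ncard_le_ncard hsub hfin
    omega
  · intro hlt
    by_contra hc
    have hPm : P m = 0 := by omega
    have hsub : {m | 0 < P m} ⊆ Set.Iio m := by
      intro a ha
      simp only [Set.mem_setOf_eq] at ha
      simp only [Set.mem_Iio]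
      by_contra h
      have := hmono m a (le_of_not_gt h)
      omega
    have h1 : (Set.Iio m).ncard = m := by
      rw [← Finset.coe_range, Set.ncard_coe_finset, Finset.card_range]
    have := Set.ncard_le_ncard hsub (Set.finite_Iio m)
    omega

end Aux

/-- The inductive step for primitive partitions: displacing along the progression
generated by `P_0 - 1` and `P_k - k - 1` removes exactly the two corners at rows
`0` and `k`, giving a 2-linked pair. -/
theorem stmt17 (P : ℕ → ℕ) (k : ℕ) (hP : IsPartition P) (h0 : 0 < P 0) (h1 : 0 < P 1)
    (hprim : 2 * (P 1 : ℤ) - 2 ≤ (P 0 : ℤ) - conj P 0)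
    (hwt : (psum P : ℤ) ≤ 2 * (P 0 : ℤ) - 2)
    (hk1 : 1 ≤ k) (hk2 : P k = P 1) (hkmax : ∀ j, P j = P 1 → j ≤ k) :
    let Λ : Set ℤ :=
      {n : ℤ | ∃ j : ℤ, n = ((P k : ℤ) - k - 1) + j * (((P 0 : ℤ) - 1) - ((P k : ℤ) - k - 1))}
    upDisp P Λ = P ∧
      downDisp P Λ = Function.update (Function.update P 0 (P 0 - 1)) k (P k - 1) ∧
      KLinked 2 (downDisp P Λ) P := by
  intro Λ
  have hmem : ∀ n : ℤ, n ∈ Λ ↔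
      ∃ j : ℤ, n = ((P k : ℤ) - k - 1) + j * (((P 0 : ℤ) - 1) - ((P k : ℤ) - k - 1)) :=
    fun n => Iff.rfl
  obtain ⟨hdec, N₀, hz⟩ := id hP
  have hmono : ∀ i j : ℕ, i ≤ j → P j ≤ P i := part_mono hP
  have hpos : ∀ m, 0 < P m ↔ m < conj P 0 := conj_pos_iff hP
  have hkN : k < conj P 0 := (hpos k).1 (by omega)
  -- the sum of the parts dominates `P 0 + P 1`
  set M : ℕ := max N₀ (k + 2) with hM
  have hMk' : k + 2 ≤ M := le_max_right N₀ (k + 2)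
  have hMz : ∀ n ≥ M, P n = 0 := fun n hn => hz n (le_trans (le_max_left _ _) hn)
  have hsupp : Function.support P ⊆ ↑(Finset.range M) := by
    intro a ha
    simp only [Function.mem_support] at ha
    simp only [Finset.coe_range, Set.mem_Iio]
    by_contra hc
    exact ha (hMz a (le_of_not_gt hc))
  have hpsum : psum P = ∑ i ∈ Finset.range M, P i :=
    finsum_eq_sum_of_support_subset P hsupp
  have h01 : P 0 + P 1 ≤ psum P := by
    rw [hpsum]
    calc P 0 + P 1 = ∑ i ∈ Finset.range 2, P i := by
          simp [Finset.sum_range_succ]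
      _ ≤ ∑ i ∈ Finset.range M, P i :=
          Finset.sum_le_sum_of_subset (Finset.range_subset_range.2 (by omega))
  have hP01 : P 1 + 2 ≤ P 0 := by
    have h01' : ((P 0 : ℤ) + P 1 : ℤ) ≤ (psum P : ℤ) := by exact_mod_cast h01
    have : (P 1 : ℤ) + 2 ≤ P 0 := by linarith
    exact_mod_cast this
  have hNle : (conj P 0 : ℤ) ≤ (P 0 : ℤ) - 2 * (P 1 : ℤ) + 2 := by linarith
  have hPk1 : P (k + 1) < P k := by
    rcases lt_or_eq_of_le (hdec k) with h | h
    · exact h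
    · have := hkmax (k + 1) (by omega)
      omega
  -- membership facts
  have hxmem : ((P 0 : ℤ) - 1) ∈ Λ := (hmem _).2 ⟨1, by ring⟩
  have hymem : ((P k : ℤ) - k - 1) ∈ Λ := (hmem _).2 ⟨0, by ring⟩
  -- the key exclusion lemma
  have key : ∀ n : ℤ,
      ((P 0 : ℤ) - 1) - 2 * (((P 0 : ℤ) - 1) - ((P k : ℤ) - k - 1)) < n →
      n < ((P 0 : ℤ) - 1) + (((P 0 : ℤ) - 1) - ((P k : ℤ) - k - 1)) →
      n ≠ ((P k : ℤ) - k - 1) → n ≠ (P 0 : ℤ) - 1 → n ∉ Λ := by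
    intro n hlo hhi hny hnx hn
    obtain ⟨j, hj⟩ := (hmem n).1 hn
    set D : ℤ := ((P 0 : ℤ) - 1) - ((P k : ℤ) - k - 1) with hD
    have hD3 : 3 ≤ D := by rw [hD]; omega
    have hlo' : -D < j * D := by
      rw [hj] at hlo
      have := hD
      linarith
    have hhi' : j * D < 2 * D := by
      rw [hj] at hhi
      have := hD
      linarith
    have hj0 : 0 ≤ j := by
      by_contra h
      have h' : j ≤ -1 := by omega
      have : j * D ≤ (-1) * D := mul_le_mul_of_nonneg_right h' (by linarith)
      linarith
    have hj1 : j ≤ 1 := by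
      by_contra h
      have h' : (2 : ℤ) ≤ j := by omega
      have : 2 * D ≤ j * D := mul_le_mul_of_nonneg_right h' (by linarith)
      linarith
    have : j = 0 ∨ j = 1 := by omega
    rcases this with rfl | rfl
    · exact hny (by rw [hj]; ring)
    · exact hnx (by rw [hj, hD]; ring)
  -- Part A: the upward displacement fixes P
  have upA : upDisp P Λ = P := by
    funext i
    have hnc : ¬ (((P i : ℤ) - i) ∈ Λ ∧ (i = 0 ∨ P i < P (i - 1))) := by
      rintro ⟨hin, hcor⟩
      rcases eq_or_ne i 0 with rfl | hi0
      · exact key _ (by push_cast; omega) (by push_cast; omega)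
          (by push_cast; omega) (by push_cast; omega) hin
      · rcases Nat.eq_zero_or_pos (P i) with hPi0 | hPip
        · have hcor' : P i < P (i - 1) := by
            rcases hcor with h | h
            · exact absurd h hi0
            · exact h
          have h1N : i - 1 < conj P 0 := (hpos _).mp (by omega)
          have h2N : ¬ i < conj P 0 := fun h => by
            have := (hpos i).mpr h; omega
          exact key _ (by omega) (by omega) (by omega) (by omega) hin
        · have hiN : i < conj P 0 := (hpos i).mp hPip
          have hle1 : P i ≤ P 1 := hmono 1 i (by omega)
          rcases le_or_gt i k with hik | hik
          · have hge : P k ≤ P i := hmono i k hik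
            exact key _ (by omega) (by omega) (by omega) (by omega) hin
          · have hle : P i ≤ P (k + 1) := hmono (k + 1) i hik
            exact key _ (by omega) (by omega) (by omega) (by omega) hin
    simp only [upDisp, if_neg hnc]
  -- Part B: the downward displacement removes the two corners
  have downB : downDisp P Λ = Function.update (Function.update P 0 (P 0 - 1)) k (P k - 1) := by
    funext i
    rw [Function.update_apply, Function.update_apply]
    rcases eq_or_ne i k with rfl | hik
    · rw [if_pos rfl]
      simp only [downDisp]
      rw [if_pos ⟨hymem, hPk1⟩]
    · rw [if_neg hik]
      rcases eq_or_ne i 0 with rfl | hi0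
      · rw [if_pos rfl]
        simp only [downDisp]
        rw [if_pos]
        constructor
        · have he : ((P 0 : ℤ) - ((0 : ℕ) : ℤ) - 1) = (P 0 : ℤ) - 1 := by push_cast; ring
          rw [he]; exact hxmem
        · show P 1 < P 0
          omega
      · rw [if_neg hi0]
        simp only [downDisp]
        rw [if_neg]
        rintro ⟨hin, hlt⟩
        have hPip : 0 < P i := by omega
        have hiN : i < conj P 0 := (hpos i).mp hPip
        have hle1 : P i ≤ P 1 := hmono 1 i (by omega)
        rcases Nat.lt_or_ge i k with h | h
        · have hge : P k ≤ P i := hmono i k (le_of_lt h)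
          exact key _ (by omega) (by omega) (by omega) (by omega) hin
        · have h' : k < i := by omega
          have hle : P i ≤ P k := hmono k i (le_of_lt h')
          exact key _ (by omega) (by omega) (by omega) (by omega) hin
  refine ⟨upA, downB, ?_⟩
  rw [downB]
  set Q : ℕ → ℕ := Function.update (Function.update P 0 (P 0 - 1)) k (P k - 1) with hQdef
  have hQ : ∀ i, Q i = if i = k then P k - 1 else if i = 0 then P 0 - 1 else P i := by
    intro i
    simp only [hQdef, Function.update_apply]
  have hQk : Q k = P k - 1 := by rw [hQ]; simp
  have hQ0 : Q 0 = P 0 - 1 := by rw [hQ, if_neg (by omega), if_pos rfl]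
  have hQelse : ∀ i, i ≠ 0 → i ≠ k → Q i = P i := by
    intro i hi0 hik
    rw [hQ, if_neg hik, if_neg hi0]
  -- upward displacement of Q recovers P
  have upQ : upDisp Q Λ = P := by
    funext i
    simp only [upDisp]
    rcases eq_or_ne i k with hik | hik
    · rw [hik]
      have hcond : ((Q k : ℤ) - (k : ℤ)) ∈ Λ ∧ (k = 0 ∨ Q k < Q (k - 1)) := by
        constructor
        · have he : ((Q k : ℤ) - (k : ℤ)) = (P k : ℤ) - k - 1 := by omega
          rw [he]; exact hymem
        · right
          rcases eq_or_ne k 1 with hk1' | hk1'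
          · subst hk1'
            have he : Q (1 - 1) = Q 0 := rfl
            omega
          · have h2 : Q (k - 1) = P (k - 1) := hQelse (k - 1) (by omega) (by omega)
            have h3 : P k ≤ P (k - 1) := hmono (k - 1) k (by omega)
            omega
      rw [if_pos hcond]
      omega
    · rcases eq_or_ne i 0 with hi0 | hi0
      · rw [hi0]
        have hcond : ((Q 0 : ℤ) - ((0 : ℕ) : ℤ)) ∈ Λ ∧ ((0 : ℕ) = 0 ∨ Q 0 < Q (0 - 1)) := by
          constructor
          · have he : ((Q 0 : ℤ) - ((0 : ℕ) : ℤ)) = (P 0 : ℤ) - 1 := by push_cast; omega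
            rw [he]; exact hxmem
          · exact Or.inl rfl
        rw [if_pos hcond]
        omega
      · have hQi : Q i = P i := hQelse i hi0 hik
        rw [hQi]
        rw [if_neg]
        rintro ⟨hin, hcor⟩
        rcases hcor with h | hcor
        · exact hi0 h
        rcases Nat.eq_zero_or_pos (P i) with hPi0 | hPip
        · have hQlt : 0 < Q (i - 1) := by omega
          have hiN' : i ≤ conj P 0 := by
            rcases eq_or_ne (i - 1) k with hek | hnek
            · omega
            · rcases eq_or_ne (i - 1) 0 with he0 | hne0
              · omega
              · have hq : Q (i - 1) = P (i - 1) := hQelse (i - 1) hne0 hnek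
                have hp : 0 < P (i - 1) := by omega
                have := (hpos (i - 1)).mp hp
                omega
          have hgt : ¬ i < conj P 0 := fun h => by
            have := (hpos i).mpr h; omega
          exact key _ (by omega) (by omega) (by omega) (by omega) hin
        · have hiN : i < conj P 0 := (hpos i).mp hPip
          have hle1 : P i ≤ P 1 := hmono 1 i (by omega)
          rcases le_or_gt i k with hik' | hik'
          · have hge : P k ≤ P i := hmono i k hik'
            exact key _ (by omega) (by omega) (by omega) (by omega) hin
          · have hle : P i ≤ P (k + 1) := hmono (k + 1) i hik'
            exact key _ (by omega) (by omega) (by omega) (by omega) hin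
  -- Λ is an arithmetic progression
  have hAP : IsAP Λ := by
    constructor
    · intro hU
      have hmemP0 : ((P 0 : ℤ)) ∈ Λ := by rw [hU]; trivial
      exact key _ (by omega) (by omega) (by omega) (by omega) hmemP0
    · intro a b c e ha hb hc he
      obtain ⟨ja, hja⟩ := (hmem a).1 ha
      obtain ⟨jb, hjb⟩ := (hmem b).1 hb
      obtain ⟨jc, hjc⟩ := (hmem c).1 hc
      obtain ⟨je, hje⟩ := (hmem e).1 he
      refine ⟨_, (hmem _).2 ⟨ja - jb + jc - je, rfl⟩, _, (hmem _).2 ⟨0, rfl⟩, ?_⟩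
      rw [hja, hjb, hjc, hje]
      ring
  -- the sums differ by 2
  have hQle : ∀ i, Q i ≤ P i := by
    intro i
    rcases eq_or_ne i k with h | h
    · rw [hQ, if_pos h, h]
      omega
    · rcases eq_or_ne i 0 with h0 | h0
      · rw [hQ, if_neg h, if_pos h0, h0]
        omega
      · rw [hQelse i h0 h]
  have hsQ : Function.support Q ⊆ ↑(Finset.range M) := by
    intro a ha
    simp only [Function.mem_support] at ha
    apply hsupp
    simp only [Function.mem_support]
    have := hQle a
    omega
  have hpsumQ : psum Q = ∑ i ∈ Finset.range M, Q i :=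
    finsum_eq_sum_of_support_subset Q hsQ
  have hsum2 : ∑ i ∈ Finset.range M, P i = (∑ i ∈ Finset.range M, Q i) + 2 := by
    have hpt : ∀ i ∈ Finset.range M, P i
        = Q i + ((if i = 0 then 1 else 0) + (if i = k then 1 else 0)) := by
      intro i _
      rcases eq_or_ne i k with hi1 | hi1
      · rw [hi1, hQk, if_neg (show ¬ (k = 0) by omega), if_pos rfl]
        omega
      · rcases eq_or_ne i 0 with hi2 | hi2
        · rw [hi2, hQ0, if_pos rfl, if_neg (show ¬ ((0 : ℕ) = k) by omega)]
          omega
        · simp only [hQelse i hi2 hi1, if_neg hi1, if_neg hi2]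
          omega
    rw [Finset.sum_congr rfl hpt, Finset.sum_add_distrib, Finset.sum_add_distrib]
    have e1 : ∑ i ∈ Finset.range M, (if i = 0 then (1 : ℕ) else 0) = 1 := by
      rw [Finset.sum_ite_eq' (Finset.range M) 0 (fun _ => (1 : ℕ))]
      rw [if_pos (Finset.mem_range.mpr (by omega))]
    have e2 : ∑ i ∈ Finset.range M, (if i = k then (1 : ℕ) else 0) = 1 := by
      rw [Finset.sum_ite_eq' (Finset.range M) k (fun _ => (1 : ℕ))]
      rw [if_pos (Finset.mem_range.mpr (by omega))]
    rw [e1, e2]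
  refine ⟨⟨Λ, hAP, upQ.symm, downB.symm⟩, ?_⟩
  rw [hpsum, hpsumQ, hsum2]
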